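/- For every μ > 0, the minimal Fisher information of the superposition of the ground state and the second excited state satisfies (6 − 2√6)·μ < 2μ; that is, the minimum Fisher information of the superposition √p·ψ_0 + √(1−p)·ψ_2 over p ∈ [0,1] is strictly smaller than the Fisher information I_F[ψ_0] = 2μ of the ground state. -/
import Mathlib


open Real

theorem stmt_10 (μ : ℝ) (hμ : 0 < μ) :
    IsLeast
        {y : ℝ | ∃ p ∈ Set.Icc (0 : ℝ) 1,
          y = p * (2 * μ) + (1 - p) * (10 * μ) - 4 * μ * Real.sqrt (2 * p * (1 - p))}
        ((6 - 2 * Real.sqrt 6) * μ)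
    ∧ (6 - 2 * Real.sqrt 6) * μ < 2 * μ := by
  have hs0 : (0:ℝ) ≤ Real.sqrt 6 := Real.sqrt_nonneg 6
  have hs : Real.sqrt 6 ^ 2 = 6 := Real.sq_sqrt (by norm_num)
  set s := Real.sqrt 6 with hsdef
  have hs2 : 2 < s := by nlinarith
  have hs3 : s < 3 := by nlinarith
  refine ⟨⟨⟨1/2 + s/6, ⟨by nlinarith, by nlinarith⟩, ?_⟩, ?_⟩, by nlinarith⟩
  · have harg : 2 * (1/2 + s/6) * (1 - (1/2 + s/6)) = (s/6)^2 := by nlinarith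
    rw [harg, Real.sqrt_sq (by positivity)]
    ring
  · rintro y ⟨p, ⟨hp0, hp1⟩, rfl⟩
    set q := Real.sqrt (2 * p * (1 - p)) with hq
    have hq0 : 0 ≤ q := Real.sqrt_nonneg _
    have hq2 : q ^ 2 = 2 * p * (1 - p) := Real.sq_sqrt (by nlinarith)
    have key : 4 * q ≤ 4 - 8 * p + 2 * s := by
      nlinarith [sq_nonneg (6*p - 3 - s), sq_nonneg (4*q - (4 - 8*p + 2*s)), sq_nonneg q]
    nlinarith [mul_nonneg (le_of_lt hμ) (by nlinarith : (0:ℝ) ≤ 4 - 8*p + 2*s - 4*q)]
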